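/- Let P be a connected finite poset with n ≥ 2 elements satisfying e(P) = (n−1)!. Then either P has an element that is strictly below all other elements and the remaining n−1 elements are pairwise incomparable, or P has an element that is strictly above all other elements and the remaining n−1 elements are pairwise incomparable. -/

import Mathlib

/-- The number of linear extensions of a finite poset `P`. -/
noncomputable def extNum (P : Type*) [instF : Fintype P] [instO : PartialOrder P] : ℕ :=
  Nat.card {f : P ≃ Fin (Fintype.card P) // ∀ x y : P, x ≤ y → f x ≤ f y}

/-- The comparability graph of a poset: distinct elements are adjacent iff comparable. -/
def compGraph (P : Type*) [PartialOrder P] : SimpleGraph P where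
  Adj x y := x ≠ y ∧ (x ≤ y ∨ y ≤ x)
  symm := ⟨fun _ _ h => ⟨h.1.symm, h.2.symm⟩⟩
  loopless := ⟨fun _ h => h.1 rfl⟩

section Helpers

variable {α : Type*} [DecidableEq α]

lemma exists_perm_two (x y p q : α) (hxy : x ≠ y) (hpq : p ≠ q) :
    ∃ π : Equiv.Perm α, π x = p ∧ π y = q ∧
      ∀ a, a ≠ x → a ≠ y → a ≠ p → a ≠ q → π a = a := by
  refine ⟨(Equiv.swap x p).trans (Equiv.swap ((Equiv.swap x p) y) q), ?_, ?_, ?_⟩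
  · simp only [Equiv.trans_apply, Equiv.swap_apply_left]
    have h1 : p ≠ (Equiv.swap x p) y := by
      intro h
      apply hxy
      have h2 := congrArg (Equiv.swap x p) h
      rw [Equiv.swap_apply_self, Equiv.swap_apply_right] at h2
      exact h2
    exact Equiv.swap_apply_of_ne_of_ne h1 hpq
  · simp only [Equiv.trans_apply, Equiv.swap_apply_left]
  · intro a hax hay hap haq
    simp only [Equiv.trans_apply]
    rw [Equiv.swap_apply_of_ne_of_ne hax hap]
    apply Equiv.swap_apply_of_ne_of_ne _ haq
    intro h
    apply hay
    have h2 := congrArg (Equiv.swap x p) h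
    rw [Equiv.swap_apply_self, Equiv.swap_apply_of_ne_of_ne hax hap] at h2
    exact h2

lemma exists_perm_four (x y z w p q r s : α)
    (hxy : x ≠ y) (hxz : x ≠ z) (hxw : x ≠ w) (hyz : y ≠ z) (hyw : y ≠ w) (hzw : z ≠ w)
    (hpq : p ≠ q) (hpr : p ≠ r) (hps : p ≠ s) (hqr : q ≠ r) (hqs : q ≠ s) (hrs : r ≠ s) :
    ∃ π : Equiv.Perm α, π x = p ∧ π y = q ∧ π z = r ∧ π w = s := by
  obtain ⟨π1, h1x, h1y, -⟩ := exists_perm_two x y p q hxy hpq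
  obtain ⟨π2, h2z, h2w, h2fix⟩ :=
    exists_perm_two (π1 z) (π1 w) r s (fun h => hzw (π1.injective h)) hrs
  have hpz : p ≠ π1 z := by rw [← h1x]; exact fun h => hxz (π1.injective h)
  have hpw : p ≠ π1 w := by rw [← h1x]; exact fun h => hxw (π1.injective h)
  have hqz : q ≠ π1 z := by rw [← h1y]; exact fun h => hyz (π1.injective h)
  have hqw : q ≠ π1 w := by rw [← h1y]; exact fun h => hyw (π1.injective h)
  refine ⟨π1.trans π2, ?_, ?_, ?_, ?_⟩
  · simp only [Equiv.trans_apply, h1x]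
    exact h2fix p hpz hpw hpr hps
  · simp only [Equiv.trans_apply, h1y]
    exact h2fix q hqz hqw hqr hqs
  · simp only [Equiv.trans_apply]; exact h2z
  · simp only [Equiv.trans_apply]; exact h2w

lemma fin_wrap {n : ℕ} [NeZero n] (y : Fin n) (h : y + 1 ≤ y) : (y : ℕ) = n - 1 := by
  have hy := y.isLt
  by_cases h2 : 2 ≤ n
  · have h1 : ((y : ℕ) + 1 % n) % n ≤ (y : ℕ) := by
      have h3 := Fin.le_def.mp h
      rwa [Fin.val_add, Fin.val_one'] at h3
    have e1 : 1 % n = 1 := Nat.mod_eq_of_lt (by omega)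
    rw [e1] at h1
    by_contra hne
    have hylt : (y : ℕ) + 1 < n := by omega
    rw [Nat.mod_eq_of_lt hylt] at h1
    omega
  · omega

end Helpers

section Poset

variable {P : Type*} [Fintype P] [PartialOrder P]

omit [Fintype P] in
lemma cross_not_connected (S : Set P) (a b : P) (ha : a ∈ S) (hb : b ∉ S)
    (hcross : ∀ u ∈ S, ∀ v, v ∉ S → ¬ (compGraph P).Adj u v)
    (hconn : (compGraph P).Connected) : False := by
  obtain ⟨wlk⟩ := hconn.preconnected a b
  have key : ∀ (u v : P), (compGraph P).Walk u v → u ∈ S → v ∈ S := by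
    intro u v wk
    induction wk with
    | nil => exact id
    | cons h _ ih =>
      intro hu
      apply ih
      by_contra hb'
      exact hcross _ hu _ hb' h
  exact hb (key a b wlk ha)

lemma key_lemma (hn : 2 ≤ Fintype.card P) (hconn : (compGraph P).Connected)
    (he : extNum P = Nat.factorial (Fintype.card P - 1))
    (σ : P ≃ Fin (Fintype.card P)) :
    ∃ L : P ≃ Fin (Fintype.card P), (∀ x y : P, x ≤ y → L x ≤ L y) ∧
      ∃ k : Fin (Fintype.card P), ∀ x : P, σ x = L x + k := by
  classical
  haveI : NeZero (Fintype.card P) := ⟨by omega⟩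
  let T := {f : P ≃ Fin (Fintype.card P) // ∀ x y : P, x ≤ y → f x ≤ f y}
  let Φ : T × Fin (Fintype.card P) → (P ≃ Fin (Fintype.card P)) :=
    fun Lk => Lk.1.1.trans (Equiv.addRight Lk.2)
  have hinj : Function.Injective Φ := by
    rintro ⟨⟨L, hL⟩, k⟩ ⟨⟨L', hL'⟩, k'⟩ h
    have heq : ∀ x : P, L x + k = L' x + k' := by
      intro x
      have h2 := congrArg (fun (e : P ≃ Fin (Fintype.card P)) => e x) h
      simpa [Φ, Equiv.coe_addRight] using h2
    set d := k - k' with hd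
    have hLL : ∀ x : P, L' x = L x + d := by
      intro x
      have h0 : L' x + k' = L x + k := (heq x).symm
      calc L' x = L' x + k' - k' := by rw [add_sub_cancel_right]
      _ = L x + k - k' := by rw [h0]
      _ = L x + (k - k') := by rw [add_sub_assoc]
    have hd0 : d = 0 := by
      by_contra hdne
      have hdpos : 0 < (d : ℕ) := by
        rcases Nat.eq_zero_or_pos (d : ℕ) with h0 | h0
        · exact absurd (Fin.ext h0) hdne
        · exact h0
      have hdlt : (d : ℕ) < Fintype.card P := d.isLt
      set S : Set P := {x | (L x : ℕ) + (d : ℕ) < Fintype.card P} with hS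
      have haS : L.symm 0 ∈ S := by
        simp only [S, Set.mem_setOf_eq, Equiv.apply_symm_apply, Fin.val_zero]
        omega
      have hbS : L.symm ⟨Fintype.card P - (d : ℕ), by omega⟩ ∉ S := by
        simp only [S, Set.mem_setOf_eq, Equiv.apply_symm_apply]
        omega
      have hcross : ∀ u ∈ S, ∀ v, v ∉ S → ¬ (compGraph P).Adj u v := by
        intro u hu v hv hadj
        have hu' : (L u : ℕ) + (d : ℕ) < Fintype.card P := hu
        have hv' : ¬ ((L v : ℕ) + (d : ℕ) < Fintype.card P) := hv
        have hvlt : (L v : ℕ) < Fintype.card P := (L v).isLt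
        have hL'u : (L' u : ℕ) = (L u : ℕ) + (d : ℕ) := by
          rw [hLL u, Fin.val_add, Nat.mod_eq_of_lt hu']
        have hL'v : (L' v : ℕ) = (L v : ℕ) + (d : ℕ) - Fintype.card P := by
          rw [hLL v, Fin.val_add]
          have h1 : ((L v : ℕ) + (d : ℕ)) % Fintype.card P
              = ((L v : ℕ) + (d : ℕ) - Fintype.card P) % Fintype.card P :=
            Nat.mod_eq_sub_mod (by omega)
          rw [h1, Nat.mod_eq_of_lt (by omega)]
        have hadj' : u ≠ v ∧ (u ≤ v ∨ v ≤ u) := hadj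
        rcases hadj'.2 with hle | hle
        · have h3 : (L' u : ℕ) ≤ (L' v : ℕ) := Fin.le_def.mp (hL' u v hle)
          omega
        · have h3 : (L v : ℕ) ≤ (L u : ℕ) := Fin.le_def.mp (hL v u hle)
          omega
      exact cross_not_connected S _ _ haS hbS hcross hconn
    have hkk : k = k' := sub_eq_zero.mp hd0
    have hLeq : L = L' := by
      apply Equiv.ext
      intro x
      rw [hLL x, hd0, add_zero]
    subst hkk
    simp [hLeq]
  have hcardT : Fintype.card T = Nat.factorial (Fintype.card P - 1) := by
    rw [← Nat.card_eq_fintype_card]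
    exact he
  have hcard : Fintype.card (T × Fin (Fintype.card P))
      = Fintype.card (P ≃ Fin (Fintype.card P)) := by
    rw [Fintype.card_prod, hcardT, Fintype.card_fin,
      Fintype.card_equiv (Fintype.equivFin P)]
    rw [Nat.mul_comm]
    exact Nat.mul_factorial_pred (by omega)
  have hsurj : Function.Surjective Φ :=
    ((Fintype.bijective_iff_injective_and_card Φ).mpr ⟨hinj, hcard⟩).surjective
  obtain ⟨⟨⟨L, hL⟩, k⟩, hΦ⟩ := hsurj σ
  refine ⟨L, hL, k, fun x => ?_⟩
  have h2 := congrArg (fun (e : P ≃ Fin (Fintype.card P)) => e x) hΦ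
  simpa [Φ, Equiv.coe_addRight] using h2.symm

lemma no_chain (hn : 2 ≤ Fintype.card P) (hconn : (compGraph P).Connected)
    (he : extNum P = Nat.factorial (Fintype.card P - 1))
    {a b c : P} (hab : a < b) (hbc : b < c) : False := by
  classical
  haveI : NeZero (Fintype.card P) := ⟨by omega⟩
  have hval1 : ((1 : Fin (Fintype.card P)) : ℕ) = 1 := by
    rw [Fin.val_one']
    exact Nat.mod_eq_of_lt (by omega)
  let e : P ≃ Fin (Fintype.card P) := Fintype.equivFin P
  set t0 : Fin (Fintype.card P) := ⟨0, by omega⟩ with ht0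
  have ht01 : t0 ≠ t0 + 1 := by
    intro h
    have h2 := congrArg Fin.val h
    rw [Fin.val_add, hval1] at h2
    simp only [ht0, Nat.zero_add] at h2
    rw [Nat.mod_eq_of_lt (by omega)] at h2
    omega
  obtain ⟨π, hπb, hπa, -⟩ :=
    exists_perm_two (e b) (e a) t0 (t0 + 1) (fun h => hab.ne' (e.injective h)) ht01
  obtain ⟨L, hL, k, hk⟩ := key_lemma hn hconn he (e.trans π)
  have hσb : π (e b) = L b + k := hk b
  have hσa : π (e a) = L a + k := hk a
  have hLa : L a = L b + 1 := by
    have h1 : L a + k = (L b + 1) + k := by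
      calc L a + k = π (e a) := hσa.symm
      _ = t0 + 1 := hπa
      _ = (L b + k) + 1 := by rw [← hσb, hπb]
      _ = (L b + 1) + k := by rw [add_right_comm]
    exact add_right_cancel h1
  have hwrap : (L b : ℕ) = Fintype.card P - 1 := by
    apply fin_wrap
    rw [← hLa]
    exact hL a b hab.le
  have hLc : (L b : ℕ) ≤ (L c : ℕ) := Fin.le_def.mp (hL b c hbc.le)
  have hcn : (L c : ℕ) < Fintype.card P := (L c).isLt
  have hbc' : L b = L c := Fin.ext (by omega)
  exact hbc.ne (L.injective hbc')

lemma no_disjoint (hn : 2 ≤ Fintype.card P) (hconn : (compGraph P).Connected)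
    (he : extNum P = Nat.factorial (Fintype.card P - 1))
    {a b c d : P} (hab : a < b) (hcd : c < d)
    (hac : a ≠ c) (had : a ≠ d) (hbc : b ≠ c) (hbd : b ≠ d) : False := by
  classical
  haveI : NeZero (Fintype.card P) := ⟨by omega⟩
  have h4 : 4 ≤ Fintype.card P := by
    have hcard : ({a, b, c, d} : Finset P).card = 4 := by
      rw [Finset.card_insert_of_notMem (by simp [hab.ne, hac, had]),
        Finset.card_insert_of_notMem (by simp [hbc, hbd]),
        Finset.card_insert_of_notMem (by simp [hcd.ne]), Finset.card_singleton]
    calc 4 = ({a, b, c, d} : Finset P).card := hcard.symm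
    _ ≤ Fintype.card P := Finset.card_le_univ _
  have hval1 : ((1 : Fin (Fintype.card P)) : ℕ) = 1 := by
    rw [Fin.val_one']
    exact Nat.mod_eq_of_lt (by omega)
  let e : P ≃ Fin (Fintype.card P) := Fintype.equivFin P
  set t0 : Fin (Fintype.card P) := ⟨0, by omega⟩ with ht0
  set t2 : Fin (Fintype.card P) := ⟨2, by omega⟩ with ht2
  have hval01 : ((t0 + 1 : Fin (Fintype.card P)) : ℕ) = 1 := by
    rw [Fin.val_add, hval1]
    simp only [ht0]
    rw [Nat.zero_add, Nat.mod_eq_of_lt (by omega)]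
  have hval21 : ((t2 + 1 : Fin (Fintype.card P)) : ℕ) = 3 := by
    rw [Fin.val_add, hval1]
    simp only [ht2]
    rw [Nat.mod_eq_of_lt (by omega)]
  have hne : ∀ u v : Fin (Fintype.card P), (u : ℕ) ≠ (v : ℕ) → u ≠ v :=
    fun u v h hh => h (congrArg Fin.val hh)
  obtain ⟨π, hπb, hπa, hπd, hπc⟩ :=
    exists_perm_four (e b) (e a) (e d) (e c) t0 (t0 + 1) t2 (t2 + 1)
      (fun h => hab.ne' (e.injective h))
      (fun h => hbd (e.injective h))
      (fun h => hbc (e.injective h))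
      (fun h => had (e.injective h))
      (fun h => hac (e.injective h))
      (fun h => hcd.ne' (e.injective h))
      (hne _ _ (by rw [hval01]; simp [ht0]))
      (hne _ _ (by simp [ht0, ht2]))
      (hne _ _ (by rw [hval21]; simp [ht0]))
      (hne _ _ (by rw [hval01]; simp [ht2]))
      (hne _ _ (by rw [hval01, hval21]; omega))
      (hne _ _ (by rw [hval21]; simp [ht2]))
  obtain ⟨L, hL, k, hk⟩ := key_lemma hn hconn he (e.trans π)
  have hkb : π (e b) = L b + k := hk b
  have hkd : π (e d) = L d + k := hk d
  have hLa : L a = L b + 1 := by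
    have h1 : L a + k = (L b + 1) + k := by
      calc L a + k = π (e a) := (hk a).symm
      _ = t0 + 1 := hπa
      _ = (L b + k) + 1 := by rw [← hkb, hπb]
      _ = (L b + 1) + k := by rw [add_right_comm]
    exact add_right_cancel h1
  have hLc : L c = L d + 1 := by
    have h1 : L c + k = (L d + 1) + k := by
      calc L c + k = π (e c) := (hk c).symm
      _ = t2 + 1 := hπc
      _ = (L d + k) + 1 := by rw [← hkd, hπd]
      _ = (L d + 1) + k := by rw [add_right_comm]
    exact add_right_cancel h1
  have hwb : (L b : ℕ) = Fintype.card P - 1 := by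
    apply fin_wrap
    rw [← hLa]
    exact hL a b hab.le
  have hwd : (L d : ℕ) = Fintype.card P - 1 := by
    apply fin_wrap
    rw [← hLc]
    exact hL c d hcd.le
  exact hbd (L.injective (Fin.ext (by omega)))

lemma exists_adj (hn : 2 ≤ Fintype.card P) (hconn : (compGraph P).Connected) (u : P) :
    ∃ v : P, u < v ∨ v < u := by
  obtain ⟨w, hw⟩ := Fintype.exists_ne_of_one_lt_card (by omega) u
  obtain ⟨wlk⟩ := hconn.preconnected u w
  cases wlk with
  | nil => exact absurd rfl hw
  | cons h _ =>
    rename_i v _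
    have h' : u ≠ v ∧ (u ≤ v ∨ v ≤ u) := h
    rcases h'.2 with hle | hle
    · exact ⟨v, Or.inl (lt_of_le_of_ne hle h'.1)⟩
    · exact ⟨v, Or.inr (lt_of_le_of_ne hle h'.1.symm)⟩

end Poset

theorem statement6 (P : Type*) [Fintype P] [PartialOrder P]
    (hn : 2 ≤ Fintype.card P) (hconn : (compGraph P).Connected)
    (he : extNum P = Nat.factorial (Fintype.card P - 1)) :
    (∃ x : P, (∀ y : P, y ≠ x → x < y) ∧
      ∀ y z : P, y ≠ x → z ≠ x → y ≠ z → ¬ y ≤ z) ∨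
    (∃ x : P, (∀ y : P, y ≠ x → y < x) ∧
      ∀ y z : P, y ≠ x → z ≠ x → y ≠ z → ¬ y ≤ z) := by
  classical
  have nochain : ∀ {a b c : P}, a < b → b < c → False :=
    fun hab hbc => no_chain hn hconn he hab hbc
  have nodis : ∀ {a b c d : P}, a < b → c < d → a ≠ c → a ≠ d → b ≠ c → b ≠ d → False :=
    fun hab hcd h1 h2 h3 h4 => no_disjoint hn hconn he hab hcd h1 h2 h3 h4
  have hadj : ∀ u : P, ∃ v, u < v ∨ v < u := exists_adj hn hconn
  obtain ⟨u0⟩ : Nonempty P := Fintype.card_pos_iff.mp (by omega)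
  obtain ⟨v0, hv0⟩ := hadj u0
  obtain ⟨p, q, hpq⟩ : ∃ p q : P, p < q := by
    rcases hv0 with h | h
    · exact ⟨u0, v0, h⟩
    · exact ⟨v0, u0, h⟩
  by_cases hmax : ∃ s : P, s ≠ p ∧ s < q
  · right
    obtain ⟨s, hsp, hsq⟩ := hmax
    have hform : ∀ u v : P, u < v → v = q := by
      intro u v huv
      by_contra hvq
      rcases eq_or_ne u q with rfl | huq
      · exact nochain hpq huv
      rcases eq_or_ne v p with rfl | hvp
      · exact nochain huv hpq
      rcases eq_or_ne u p with rfl | hup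
      · rcases eq_or_ne v s with rfl | hvs
        · exact nochain huv hsq
        · exact nodis huv hsq (Ne.symm hsp) hpq.ne hvs hvq
      · exact nodis huv hpq hup huq hvp hvq
    have hbelow : ∀ y : P, y ≠ q → y < q := by
      intro y hy
      obtain ⟨z, hz | hz⟩ := hadj y
      · rw [hform y z hz] at hz
        exact hz
      · exact absurd (hform z y hz) hy
    refine ⟨q, hbelow, ?_⟩
    intro y z hy hz hyz hle
    exact hz (hform y z (lt_of_le_of_ne hle hyz))
  · left
    push_neg at hmax
    have hform : ∀ u v : P, u < v → u = p := by
      intro u v huv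
      by_contra hup
      rcases eq_or_ne v q with rfl | hvq
      · exact hmax u hup huv
      rcases eq_or_ne v p with rfl | hvp
      · exact nochain huv hpq
      rcases eq_or_ne u q with rfl | huq
      · exact nochain hpq huv
      · exact nodis huv hpq hup huq hvp hvq
    have habove : ∀ y : P, y ≠ p → p < y := by
      intro y hy
      obtain ⟨z, hz | hz⟩ := hadj y
      · exact absurd (hform y z hz) hy
      · rw [hform z y hz] at hz
        exact hz
    refine ⟨p, habove, ?_⟩
    intro y z hy hz hyz hle
    exact hy (hform y z (lt_of_le_of_ne hle hyz))
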